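/- Let N ∈ ℕ with N ≥ 1 and let f : ℝ → ℝ satisfy f(x) = 0 for all x ≤ 0 and f(x) > 0 for all x > 0. For k = 1, …, N define the vectors w^{(k)} ∈ ℝ^N by w^{(k)}_i = f((k + 1 − i)/N) for i = 1, …, N (these are the neural activity patterns obtained by statically embedding the one-dimensional latent values κ = k/N via the tuning curves r_i(κ) = f(κ − (i−1)/N)). Then the family {w^{(1)}, …, w^{(N)}} is linearly independent in ℝ^N; hence the embedded neural activities span an N-dimensional linear subspace, i.e., a one-dimensional latent variable achieves the maximal linear dimensionality N. -/
import Mathlib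


/-- **Unbounded linear dimensionality from a one-dimensional latent variable
(Proposition 2 / Corollary 2).** Let `f` vanish on the nonpositive reals and be
strictly positive on the positive reals. The `N` neural activity patterns
`w^(k) ∈ ℝ^N`, `w^(k)_i = f((k + 1 - i)/N)` (for `k, i = 1, …, N`), obtained by
statically embedding the latent values `κ = k/N` through the tuning curves
`r_i(κ) = f(κ - (i-1)/N)`, are linearly independent; hence they span an
`N`-dimensional subspace, the maximal linear dimensionality. -/
theorem static_embedding_achieves_maximal_linear_dimensionality
    (N : ℕ) (hN : 1 ≤ N)
    (f : ℝ → ℝ)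
    (hf0 : ∀ x : ℝ, x ≤ 0 → f x = 0)
    (hfpos : ∀ x : ℝ, 0 < x → 0 < f x) :
    LinearIndependent ℝ
        (fun k : Fin N => fun i : Fin N =>
          f ((((k : ℕ) : ℝ) + 1 - ((i : ℕ) : ℝ)) / N)) ∧
      Module.finrank ℝ
        (Submodule.span ℝ
          (Set.range (fun k : Fin N => fun i : Fin N =>
            f ((((k : ℕ) : ℝ) + 1 - ((i : ℕ) : ℝ)) / N)))) = N := by
  have hNpos : (0 : ℝ) < N := by exact_mod_cast hN
  set M : Matrix (Fin N) (Fin N) ℝ :=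
    fun k i => f ((((k : ℕ) : ℝ) + 1 - ((i : ℕ) : ℝ)) / N) with hM
  have htri : M.BlockTriangular OrderDual.toDual := by
    intro k i h
    have hki : (k : ℕ) < (i : ℕ) := h
    apply hf0
    apply div_nonpos_of_nonpos_of_nonneg _ hNpos.le
    have : ((k : ℕ) : ℝ) + 1 ≤ ((i : ℕ) : ℝ) := by exact_mod_cast hki
    linarith
  have hdet : M.det ≠ 0 := by
    rw [Matrix.det_of_lowerTriangular M htri]
    apply Finset.prod_ne_zero_iff.2
    intro k _
    have : (0 : ℝ) < f ((((k : ℕ) : ℝ) + 1 - ((k : ℕ) : ℝ)) / N) := by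
      apply hfpos
      have : (((k : ℕ) : ℝ) + 1 - ((k : ℕ) : ℝ)) = 1 := by ring
      rw [this]
      positivity
    exact ne_of_gt this
  have hli : LinearIndependent ℝ (fun k : Fin N => fun i : Fin N =>
      f ((((k : ℕ) : ℝ) + 1 - ((i : ℕ) : ℝ)) / N)) := by
    have := Matrix.linearIndependent_rows_iff_isUnit.2
      (Matrix.isUnit_iff_isUnit_det M |>.2 (isUnit_iff_ne_zero.2 hdet))
    exact this
  refine ⟨hli, ?_⟩
  rw [finrank_span_eq_card hli, Fintype.card_fin]
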